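/- Let K be a field and c ∈ ℤⁿ with c⁺ ≠ 0 and c⁻ ≠ 0 (so the ℤⁿ/ℤc-grading of S = K[x₁,…,xₙ] is positive). Let I ⊆ S be an ideal that is homogeneous with respect to the ℤⁿ/ℤc-grading, let ≺ and ≺' be term orders with x^{c⁺} ≺ x^{c⁻} and x^{c⁺} ≻' x^{c⁻}, and set M = in_≺(I) and N = in_{≺'}(I) (these are monomial ideals). Then there exists an arrow map f : Mon(M) → Mon(N) with respect to the ℤⁿ/ℤc-grading and the term order ≺. -/

import Mathlib

open MvPolynomial

/-- A term order on the monomial exponents of `K[x₁,…,xₙ]`: a strict total order on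
`Fin n →₀ ℕ` with `0` smallest and compatible with addition. -/
def IsTermOrder (n : ℕ) (lt : (Fin n →₀ ℕ) → (Fin n →₀ ℕ) → Prop) : Prop :=
  (∀ u v : Fin n →₀ ℕ, lt u v ∨ u = v ∨ lt v u) ∧
  (∀ u v w : Fin n →₀ ℕ, lt u v → lt v w → lt u w) ∧
  (∀ u : Fin n →₀ ℕ, ¬ lt u u) ∧
  (∀ u : Fin n →₀ ℕ, u ≠ 0 → lt 0 u) ∧
  (∀ u v w : Fin n →₀ ℕ, lt u v → lt (u + w) (v + w))

/-- `u` is the exponent of the `lt`-leading monomial `in_≺(f)` of `f`. -/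
def IsLeadExp {n : ℕ} {K : Type*} [Field K] (lt : (Fin n →₀ ℕ) → (Fin n →₀ ℕ) → Prop)
    (f : MvPolynomial (Fin n) K) (u : Fin n →₀ ℕ) : Prop :=
  u ∈ f.support ∧ ∀ v ∈ f.support, v ≠ u → lt v u

/-- The initial ideal `in_≺(I)`, generated by the leading monomials of nonzero elements. -/
noncomputable def initialIdeal {n : ℕ} {K : Type*} [Field K]
    (lt : (Fin n →₀ ℕ) → (Fin n →₀ ℕ) → Prop) (I : Ideal (MvPolynomial (Fin n) K)) :
    Ideal (MvPolynomial (Fin n) K) :=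
  Ideal.span { p | ∃ f ∈ I, ∃ u, IsLeadExp lt f u ∧ p = monomial u 1 }

/-- `DistRel c u v ℓ` says that `u - v = ℓ·c` in `ℤⁿ`; then `d(x^u, x^v) = |ℓ|`. -/
def DistRel {n : ℕ} (c : Fin n → ℤ) (u v : Fin n →₀ ℕ) (ℓ : ℤ) : Prop :=
  ∀ i, (u i : ℤ) - (v i : ℤ) = ℓ * c i

/-- Two monomials have the same degree in the `ℤⁿ/ℤc`-grading iff `u - v ∈ ℤc`. -/
def SameDeg {n : ℕ} (c : Fin n → ℤ) (u v : Fin n →₀ ℕ) : Prop :=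
  ∃ ℓ : ℤ, DistRel c u v ℓ

/-- A polynomial is homogeneous for the `ℤⁿ/ℤc`-grading if all of its monomials
have the same degree. -/
def CHom {n : ℕ} {K : Type*} [Field K] (c : Fin n → ℤ) (f : MvPolynomial (Fin n) K) : Prop :=
  ∀ u ∈ f.support, ∀ v ∈ f.support, SameDeg c u v

/-- An ideal is homogeneous for the `ℤⁿ/ℤc`-grading if it is generated by homogeneous
elements. -/
def CHomIdeal {n : ℕ} {K : Type*} [Field K] (c : Fin n → ℤ)
    (I : Ideal (MvPolynomial (Fin n) K)) : Prop :=
  ∃ G : Set (MvPolynomial (Fin n) K), (∀ g ∈ G, CHom c g) ∧ I = Ideal.span G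

/-- The exponent vector `c⁺` of a vector `c ∈ ℤⁿ`. -/
noncomputable def cpos {n : ℕ} (c : Fin n → ℤ) : Fin n →₀ ℕ :=
  Finsupp.equivFunOnFinite.symm fun i => (c i).toNat

/-- The exponent vector `c⁻` of a vector `c ∈ ℤⁿ`. -/
noncomputable def cneg {n : ℕ} (c : Fin n → ℤ) : Fin n →₀ ℕ :=
  Finsupp.equivFunOnFinite.symm fun i => (-(c i)).toNat

/-- `Mon M`: the set of (exponents of) monomials lying in `M`. -/
def Mon {n : ℕ} {K : Type*} [Field K] (M : Ideal (MvPolynomial (Fin n) K)) :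
    Set (Fin n →₀ ℕ) :=
  { u | monomial u 1 ∈ M }

/-- `f` (as a map on exponent vectors) restricts to an arrow map `Mon M → Mon N`
with respect to the `ℤⁿ/ℤc`-grading and the term order `lt`:
(1) it is a degree-preserving bijection with `m ⪰ f(m)`;
(2) `d(m', f(m')) ≤ d(m, f(m))` for every multiple `m'` of `m ∈ Mon M`;
(3) `d(f⁻¹(m'), m') ≤ d(f⁻¹(m), m)` for every `m ∈ Mon N` and multiple `m'` of `m`. -/
def IsArrowMap {n : ℕ} {K : Type*} [Field K] (c : Fin n → ℤ)
    (lt : (Fin n →₀ ℕ) → (Fin n →₀ ℕ) → Prop)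
    (M N : Ideal (MvPolynomial (Fin n) K)) (f : (Fin n →₀ ℕ) → (Fin n →₀ ℕ)) : Prop :=
  Set.BijOn f (Mon M) (Mon N) ∧
  (∀ u ∈ Mon M, SameDeg c u (f u)) ∧
  (∀ u ∈ Mon M, f u = u ∨ lt (f u) u) ∧
  (∀ u ∈ Mon M, ∀ (w : Fin n →₀ ℕ) (ℓ ℓ' : ℤ),
    DistRel c u (f u) ℓ → DistRel c (u + w) (f (u + w)) ℓ' → |ℓ'| ≤ |ℓ|) ∧
  (∀ u ∈ Mon M, ∀ u' ∈ Mon M, ∀ (w : Fin n →₀ ℕ) (ℓ ℓ' : ℤ),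
    f u' = f u + w → DistRel c u (f u) ℓ → DistRel c u' (f u') ℓ' → |ℓ'| ≤ |ℓ|)

namespace ArrowAux

variable {n : ℕ} {K : Type*} [Field K]

noncomputable def shift (c : Fin n → ℤ) (u : Fin n →₀ ℕ) (ℓ : ℤ) : Fin n →₀ ℕ :=
  Finsupp.equivFunOnFinite.symm fun i => ((u i : ℤ) + ℓ * c i).toNat

theorem shift_apply (c : Fin n → ℤ) (u : Fin n →₀ ℕ) (ℓ : ℤ) (i : Fin n) :
    shift c u ℓ i = ((u i : ℤ) + ℓ * c i).toNat := by
  simp [shift]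

theorem shift_zero (c : Fin n → ℤ) (u : Fin n →₀ ℕ) : shift c u 0 = u := by
  ext i; rw [shift_apply]; simp

theorem distRel_unique_l {c : Fin n → ℤ} {x u : Fin n →₀ ℕ} {ℓ ℓ' : ℤ} (hc : ∃ i, c i ≠ 0)
    (h : DistRel c x u ℓ) (h' : DistRel c x u ℓ') : ℓ = ℓ' := by
  obtain ⟨i, hi⟩ := hc
  exact mul_right_cancel₀ hi ((h i).symm.trans (h' i))

theorem distRel_unique_pt {c : Fin n → ℤ} {x y u : Fin n →₀ ℕ} {ℓ : ℤ}
    (h : DistRel c x u ℓ) (h' : DistRel c y u ℓ) : x = y := by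
  ext i
  have h1 := h i; have h2 := h' i
  have : (x i : ℤ) = (y i : ℤ) := by linarith
  exact_mod_cast this

theorem shift_eq_of_distRel {c : Fin n → ℤ} {y u : Fin n →₀ ℕ} {ℓ : ℤ}
    (h : DistRel c y u ℓ) : shift c u ℓ = y := by
  ext i
  rw [shift_apply]
  have h1 := h i
  have : (u i : ℤ) + ℓ * c i = (y i : ℤ) := by linarith
  rw [this]; simp

theorem distRel_shift {c : Fin n → ℤ} {u : Fin n →₀ ℕ} {ℓ : ℤ}
    (h : ∀ i, 0 ≤ (u i : ℤ) + ℓ * c i) : DistRel c (shift c u ℓ) u ℓ := by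
  intro i
  rw [shift_apply, Int.toNat_of_nonneg (h i)]
  ring

theorem distRel_self (c : Fin n → ℤ) (u : Fin n →₀ ℕ) : DistRel c u u 0 := by
  intro i; simp

theorem distRel_symm {c : Fin n → ℤ} {x u : Fin n →₀ ℕ} {ℓ : ℤ} (h : DistRel c x u ℓ) :
    DistRel c u x (-ℓ) := by
  intro i; have := h i
  have e : (-ℓ) * c i = -(ℓ * c i) := by ring
  linarith

theorem distRel_neg {c : Fin n → ℤ} {x u : Fin n →₀ ℕ} {ℓ : ℤ} :
    DistRel (fun i => -(c i)) x u ℓ ↔ DistRel c x u (-ℓ) := by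
  constructor <;> intro h i
  · have h1 : (x i : ℤ) - (u i : ℤ) = ℓ * -(c i) := h i
    have e : ℓ * -(c i) = (-ℓ) * c i := by ring
    linarith
  · have h1 := h i
    show (x i : ℤ) - (u i : ℤ) = ℓ * -(c i)
    have e : ℓ * -(c i) = (-ℓ) * c i := by ring
    linarith

section Order

variable {lt : (Fin n →₀ ℕ) → (Fin n →₀ ℕ) → Prop}

theorem to_asymm (hlt : IsTermOrder n lt) {a b : Fin n →₀ ℕ} (h : lt a b) : ¬ lt b a :=
  fun h' => hlt.2.2.1 a (hlt.2.1 _ _ _ h h')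

theorem to_cancel (hlt : IsTermOrder n lt) {a b w : Fin n →₀ ℕ} (h : lt (a + w) (b + w)) :
    lt a b := by
  rcases hlt.1 a b with h1 | rfl | h1
  · exact h1
  · exact absurd h (hlt.2.2.1 _)
  · exact absurd (hlt.2.2.2.2 _ _ w h1) (to_asymm hlt h)

theorem cpos_apply (c : Fin n → ℤ) (i : Fin n) : cpos c i = (c i).toNat := by simp [cpos]

theorem cneg_apply (c : Fin n → ℤ) (i : Fin n) : cneg c i = (-(c i)).toNat := by simp [cneg]

theorem step_lt (hlt : IsTermOrder n lt) {c : Fin n → ℤ} (hlo : lt (cpos c) (cneg c))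
    {x y : Fin n →₀ ℕ} (h : DistRel c y x 1) : lt y x := by
  have key : cpos c + x = cneg c + y := by
    ext i
    have hy := h i
    simp only [Finsupp.add_apply, cpos_apply, cneg_apply]
    omega
  have h1 : lt (cpos c + x) (cneg c + x) := hlt.2.2.2.2 _ _ x hlo
  rw [key] at h1
  have h3 : lt (y + cneg c) (x + cneg c) := by
    rwa [add_comm y (cneg c), add_comm x (cneg c)]
  exact to_cancel hlt h3

theorem chain_lt (hlt : IsTermOrder n lt) {c : Fin n → ℤ} (hlo : lt (cpos c) (cneg c))
    {x y : Fin n →₀ ℕ} {m : ℤ} (h : DistRel c y x m) (hm : 0 < m) : lt y x := by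
  obtain ⟨t, rfl⟩ : ∃ t : ℕ, m = (t : ℤ) + 1 := ⟨(m - 1).toNat, by omega⟩
  induction t generalizing y with
  | zero => exact step_lt hlt hlo (by simpa using h)
  | succ t ih =>
      have hval : ∀ i, 0 ≤ (x i : ℤ) + ((t : ℤ) + 1) * c i := by
        intro i
        have hy := h i
        have hc1 : ((t + 1 : ℕ) : ℤ) = (t : ℤ) + 1 := by push_cast; ring
        rw [hc1] at hy
        have e : ((t : ℤ) + 1 + 1) * c i = ((t : ℤ) + 1) * c i + c i := by ring
        rcases le_or_gt 0 (c i) with hc | hc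
        · have h0 : 0 ≤ ((t : ℤ) + 1) * c i := by positivity
          linarith [Int.natCast_nonneg (x i)]
        · have h0 : (0:ℤ) ≤ y i := Int.natCast_nonneg (y i)
          linarith
      have hdz : DistRel c (shift c x ((t : ℤ) + 1)) x ((t : ℤ) + 1) := distRel_shift hval
      have h1 : DistRel c y (shift c x ((t : ℤ) + 1)) 1 := by
        intro i
        have e1 := hdz i
        have e2 := h i
        have hc1 : ((t + 1 : ℕ) : ℤ) = (t : ℤ) + 1 := by push_cast; ring
        rw [hc1] at e2
        have e : ((t : ℤ) + 1 + 1) * c i = ((t : ℤ) + 1) * c i + 1 * c i := by ring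
        linarith
      have h2 : lt (shift c x ((t : ℤ) + 1)) x := ih hdz (by positivity)
      exact hlt.2.1 _ _ _ (step_lt hlt hlo h1) h2

end Order

section Comp

open scoped Classical

def SameDegZ (c : Fin n → ℤ) (d : Fin n → ℤ) (x : Fin n →₀ ℕ) : Prop :=
  ∃ ℓ : ℤ, ∀ i, (x i : ℤ) - d i = ℓ * c i

theorem sameDegZ_neg (c : Fin n → ℤ) (d : Fin n → ℤ) :
    SameDegZ (fun i => -(c i)) d = SameDegZ c d := by
  funext x
  apply propext
  constructor <;> rintro ⟨ℓ, hℓ⟩ <;> refine ⟨-ℓ, fun i => ?_⟩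
  · have h1 : (x i : ℤ) - d i = ℓ * -(c i) := hℓ i
    have e : ℓ * -(c i) = (-ℓ) * c i := by ring
    linarith
  · have h1 := hℓ i
    show (x i : ℤ) - d i = (-ℓ) * -(c i)
    have e : (-ℓ) * -(c i) = ℓ * c i := by ring
    linarith

noncomputable def comp (c : Fin n → ℤ) (d : Fin n → ℤ) (f : MvPolynomial (Fin n) K) :
    MvPolynomial (Fin n) K :=
  AddMonoidAlgebra.ofCoeff (Finsupp.filter (SameDegZ c d) (AddMonoidAlgebra.coeff f))

theorem comp_neg (c : Fin n → ℤ) (d : Fin n → ℤ) (f : MvPolynomial (Fin n) K) :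
    comp (fun i => -(c i)) d f = comp c d f := by
  unfold comp
  rw [sameDegZ_neg]

theorem coeff_comp (c : Fin n → ℤ) (d : Fin n → ℤ) (f : MvPolynomial (Fin n) K)
    (x : Fin n →₀ ℕ) :
    coeff x (comp c d f) = if SameDegZ c d x then coeff x f else 0 :=
  Finsupp.filter_apply _ _ _

theorem mem_support_comp {c : Fin n → ℤ} {d : Fin n → ℤ} {f : MvPolynomial (Fin n) K}
    {x : Fin n →₀ ℕ} (h : x ∈ (comp c d f).support) : x ∈ f.support ∧ SameDegZ c d x := by
  rw [mem_support_iff, coeff_comp] at h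
  by_cases hs : SameDegZ c d x
  · rw [if_pos hs] at h
    exact ⟨mem_support_iff.2 h, hs⟩
  · rw [if_neg hs] at h
    exact absurd rfl h

theorem comp_add (c : Fin n → ℤ) (d : Fin n → ℤ) (f g : MvPolynomial (Fin n) K) :
    comp c d (f + g) = comp c d f + comp c d g :=
  congrArg AddMonoidAlgebra.ofCoeff Finsupp.filter_add

noncomputable def compHom (c : Fin n → ℤ) (d : Fin n → ℤ) :
    MvPolynomial (Fin n) K →+ MvPolynomial (Fin n) K where
  toFun := comp c d
  map_zero' := congrArg AddMonoidAlgebra.ofCoeff (Finsupp.filter_zero _)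
  map_add' := fun _ _ => comp_add c d _ _

theorem sameDegZ_sub_iff {c d : Fin n → ℤ} {v x : Fin n →₀ ℕ} (h : v ≤ x) :
    SameDegZ c d x ↔ SameDegZ c (fun i => d i - (v i : ℤ)) (x - v) := by
  have hxv : ∀ i, ((x - v) i : ℤ) = (x i : ℤ) - (v i : ℤ) := by
    intro i
    rw [Finsupp.tsub_apply]
    have := Finsupp.le_def.1 h i
    omega
  constructor <;> rintro ⟨ℓ, hℓ⟩ <;> refine ⟨ℓ, fun i => ?_⟩
  · have h1 := hℓ i
    show ((x - v) i : ℤ) - (d i - (v i : ℤ)) = ℓ * c i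
    rw [hxv i]
    linarith
  · have h1 : ((x - v) i : ℤ) - (d i - (v i : ℤ)) = ℓ * c i := hℓ i
    rw [hxv i] at h1
    linarith

theorem comp_mul_monomial (c : Fin n → ℤ) (d : Fin n → ℤ) (v : Fin n →₀ ℕ) (k : K)
    (f : MvPolynomial (Fin n) K) :
    comp c d (f * monomial v k) = comp c (fun i => d i - (v i : ℤ)) f * monomial v k := by
  apply MvPolynomial.ext
  intro x
  rw [coeff_comp, coeff_mul_monomial', coeff_mul_monomial']
  by_cases hvx : v ≤ x
  · rw [if_pos hvx, if_pos hvx, coeff_comp]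
    by_cases hs : SameDegZ c d x
    · rw [if_pos hs, if_pos ((sameDegZ_sub_iff hvx).1 hs)]
    · rw [if_neg hs, if_neg (mt (sameDegZ_sub_iff hvx).2 hs), zero_mul]
  · rw [if_neg hvx, if_neg hvx]
    split_ifs <;> rfl

theorem comp_mem {c : Fin n → ℤ} {I : Ideal (MvPolynomial (Fin n) K)} (hI : CHomIdeal c I)
    {f : MvPolynomial (Fin n) K} (hf : f ∈ I) (d : Fin n → ℤ) : comp c d f ∈ I := by
  obtain ⟨G, hG, hspan⟩ := hI
  subst hspan
  revert d
  refine Submodule.span_induction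
    (p := fun q _ => ∀ d : Fin n → ℤ, comp c d q ∈ Ideal.span G) ?_ ?_ ?_ ?_ hf
  · intro g hg d
    by_cases hex : ∃ x ∈ g.support, SameDegZ c d x
    · obtain ⟨x₀, hx₀, hsd⟩ := hex
      have heq : comp c d g = g := by
        unfold comp
        show AddMonoidAlgebra.ofCoeff _ = AddMonoidAlgebra.ofCoeff (AddMonoidAlgebra.coeff g)
        congr 1
        rw [Finsupp.filter_eq_self_iff]
        intro y hy
        obtain ⟨ℓ₁, hℓ₁⟩ := hG g hg y (mem_support_iff.2 hy) x₀ hx₀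
        obtain ⟨ℓ₂, hℓ₂⟩ := hsd
        refine ⟨ℓ₁ + ℓ₂, fun i => ?_⟩
        have e1 := hℓ₁ i
        have e2 := hℓ₂ i
        have e : (ℓ₁ + ℓ₂) * c i = ℓ₁ * c i + ℓ₂ * c i := add_mul _ _ _
        linarith
      rw [heq]
      exact Ideal.subset_span hg
    · have heq : comp c d g = 0 := by
        unfold comp
        show _ = AddMonoidAlgebra.ofCoeff 0
        congr 1
        rw [Finsupp.filter_eq_zero_iff]
        intro y hsd
        by_contra hy
        exact hex ⟨y, mem_support_iff.2 hy, hsd⟩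
      rw [heq]
      exact Submodule.zero_mem _
  · intro d
    have : comp c d (0 : MvPolynomial (Fin n) K) = 0 :=
      congrArg AddMonoidAlgebra.ofCoeff (Finsupp.filter_zero _)
    rw [this]
    exact Submodule.zero_mem _
  · intro p q _ _ hp hq d
    rw [comp_add]
    exact Submodule.add_mem _ (hp d) (hq d)
  · intro a q _ hq d
    rw [smul_eq_mul]
    nth_rewrite 1 [as_sum a]
    rw [Finset.sum_mul]
    have hsum : comp c d (∑ v ∈ a.support, monomial v (coeff v a) * q)
        = ∑ v ∈ a.support, comp c d (monomial v (coeff v a) * q) :=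
      map_sum (compHom c d) _ _
    rw [hsum]
    refine Submodule.sum_mem _ fun v _ => ?_
    rw [mul_comm, comp_mul_monomial]
    exact Ideal.mul_mem_right _ _ (hq _)

end Comp

section Main

variable {lt lt' : (Fin n →₀ ℕ) → (Fin n →₀ ℕ) → Prop}

def Good (c : Fin n → ℤ) (I : Ideal (MvPolynomial (Fin n) K)) (u : Fin n →₀ ℕ) (ℓ : ℕ) :
    Prop :=
  ∃ v ∈ I, coeff u v ≠ 0 ∧ ∀ x ∈ v.support, ∃ j : ℕ, j ≤ ℓ ∧ DistRel c x u (j : ℤ)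

noncomputable def gam (c : Fin n → ℤ) (I : Ideal (MvPolynomial (Fin n) K))
    (u : Fin n →₀ ℕ) : ℕ :=
  sInf {ℓ | Good c I u ℓ}

noncomputable def Fm (c : Fin n → ℤ) (I : Ideal (MvPolynomial (Fin n) K))
    (u : Fin n →₀ ℕ) : Fin n →₀ ℕ :=
  shift c u (gam c I u : ℤ)

theorem good_mul {c : Fin n → ℤ} {I : Ideal (MvPolynomial (Fin n) K)} {u w : Fin n →₀ ℕ}
    {ℓ : ℕ} (h : Good c I u ℓ) : Good c I (u + w) ℓ := by
  classical
  obtain ⟨v, hvI, hcv, hsupp⟩ := h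
  refine ⟨v * monomial w 1, Ideal.mul_mem_right _ I hvI, ?_, ?_⟩
  · rw [coeff_mul_monomial', if_pos (self_le_add_left w u), add_tsub_cancel_right, mul_one]
    exact hcv
  · intro x hx
    obtain ⟨y₁, hy₁, y₂, hy₂, rfl⟩ := Finset.mem_add.1 (support_mul _ _ hx)
    rw [support_monomial, if_neg one_ne_zero, Finset.mem_singleton] at hy₂
    subst hy₂
    obtain ⟨j, hj, hdr⟩ := hsupp y₁ hy₁
    refine ⟨j, hj, fun i => ?_⟩
    have h1 := hdr i
    rw [Finsupp.add_apply, Finsupp.add_apply]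
    push_cast
    linarith

theorem lead_divides {I : Ideal (MvPolynomial (Fin n) K)} {u : Fin n →₀ ℕ}
    (hu : monomial u (1 : K) ∈ initialIdeal lt I) :
    ∃ f ∈ I, ∃ u'' : Fin n →₀ ℕ, IsLeadExp lt f u'' ∧ u'' ≤ u := by
  classical
  have H : ∀ y ∈ (monomial u (1 : K)).support,
      ∃ f ∈ I, ∃ u'' : Fin n →₀ ℕ, IsLeadExp lt f u'' ∧ u'' ≤ y := by
    refine Submodule.span_induction
      (p := fun q _ => ∀ y ∈ q.support,
        ∃ f ∈ I, ∃ u'' : Fin n →₀ ℕ, IsLeadExp lt f u'' ∧ u'' ≤ y) ?_ ?_ ?_ ?_ hu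
    · rintro q ⟨f, hfI, u'', hlead, rfl⟩ y hy
      rw [support_monomial, if_neg one_ne_zero, Finset.mem_singleton] at hy
      subst hy
      exact ⟨f, hfI, y, hlead, le_rfl⟩
    · intro y hy
      simp at hy
    · intro q r _ _ hq hr y hy
      rcases Finset.mem_union.1 (Finsupp.support_add hy) with h | h
      · exact hq y h
      · exact hr y h
    · intro a q _ hq y hy
      rw [smul_eq_mul] at hy
      obtain ⟨y₁, hy₁, y₂, hy₂, rfl⟩ := Finset.mem_add.1 (support_mul a q hy)
      obtain ⟨f, hfI, u'', hl, hle⟩ := hq y₂ hy₂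
      exact ⟨f, hfI, u'', hl, hle.trans (self_le_add_left y₂ y₁)⟩
  refine H u ?_
  rw [support_monomial, if_neg one_ne_zero]
  exact Finset.mem_singleton_self u

theorem good_nonempty {c : Fin n → ℤ} {I : Ideal (MvPolynomial (Fin n) K)}
    (hlt : IsTermOrder n lt)
    (hup : ∀ y x : Fin n →₀ ℕ, ∀ m : ℤ, DistRel c y x m → 0 < m → lt y x)
    (hcomp : ∀ f ∈ I, ∀ d : Fin n → ℤ, comp c d f ∈ I)
    {i₀ : Fin n} (hi₀ : c i₀ < 0)
    {u : Fin n →₀ ℕ} (hu : monomial u (1 : K) ∈ initialIdeal lt I) :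
    ∃ ℓ, Good c I u ℓ := by
  classical
  obtain ⟨f₀, hf₀, u'', hlead, hle⟩ := lead_divides hu
  set w₀ := u - u'' with hw₀
  have huw : u'' + w₀ = u := add_tsub_cancel_of_le hle
  have hw₀le : w₀ ≤ u := tsub_le_self
  set f₁ := f₀ * monomial w₀ (1 : K) with hf₁d
  have hf₁I : f₁ ∈ I := Ideal.mul_mem_right _ I hf₀
  have hcoeffu : coeff u f₁ ≠ 0 := by
    rw [hf₁d, coeff_mul_monomial', if_pos hw₀le, mul_one]
    have h2 : u - w₀ = u'' := by
      rw [hw₀]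
      exact tsub_tsub_cancel_of_le hle
    rw [h2]
    exact mem_support_iff.1 hlead.1
  have hleadf₁ : ∀ y ∈ f₁.support, y ≠ u → lt y u := by
    intro y hy hney
    obtain ⟨y₁, hy₁, y₂, hy₂, rfl⟩ := Finset.mem_add.1 (support_mul _ _ hy)
    rw [support_monomial, if_neg one_ne_zero, Finset.mem_singleton] at hy₂
    rw [hy₂] at hney ⊢
    rcases eq_or_ne y₁ u'' with rfl | hne''
    · exact absurd huw hney
    · have h1 := hlead.2 y₁ hy₁ hne''
      have h2 := hlt.2.2.2.2 _ _ w₀ h1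
      rwa [huw] at h2
  set v := comp c (fun i => (u i : ℤ)) f₁ with hv
  have hvI : v ∈ I := hcomp f₁ hf₁I _
  have hcv : coeff u v ≠ 0 := by
    rw [hv, coeff_comp, if_pos ⟨0, fun i => by simp⟩]
    exact hcoeffu
  refine ⟨u i₀, v, hvI, hcv, ?_⟩
  intro x hx
  obtain ⟨hxf₁, m, hm⟩ := mem_support_comp (hv ▸ hx)
  have hdr : DistRel c x u m := hm
  have hm0 : 0 ≤ m := by
    by_contra hneg
    push_neg at hneg
    have hux : lt u x := hup u x (-m) (distRel_symm hdr) (by omega)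
    rcases eq_or_ne x u with rfl | hne
    · have h1 := hdr i₀
      have h2 : 0 < m * c i₀ := mul_pos_of_neg_of_neg hneg hi₀
      simp at h1
      omega
    · exact to_asymm hlt (hleadf₁ x hxf₁ hne) hux
  have hbound : m ≤ (u i₀ : ℤ) := by
    have h1 := hdr i₀
    have h2 : m * c i₀ ≤ -m := by nlinarith
    have h3 : (0 : ℤ) ≤ x i₀ := Int.natCast_nonneg _
    linarith
  refine ⟨m.toNat, by omega, ?_⟩
  rwa [Int.toNat_of_nonneg hm0]

theorem fm_spec {c : Fin n → ℤ} {I : Ideal (MvPolynomial (Fin n) K)} {u : Fin n →₀ ℕ}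
    (hne : ∃ ℓ, Good c I u ℓ) :
    DistRel c (Fm c I u) u (gam c I u : ℤ) ∧
    ∃ v ∈ I, coeff u v ≠ 0 ∧ coeff (Fm c I u) v ≠ 0 ∧
      ∀ x ∈ v.support, ∃ j : ℕ, j ≤ gam c I u ∧ DistRel c x u (j : ℤ) := by
  obtain ⟨v, hvI, hcv, hsupp⟩ : Good c I u (gam c I u) := Nat.sInf_mem hne
  rcases Nat.eq_zero_or_pos (gam c I u) with hL | hL
  · have hFm : Fm c I u = u := by
      rw [Fm, hL]
      exact_mod_cast shift_zero c u
    constructor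
    · rw [hFm, hL]
      exact_mod_cast distRel_self c u
    · exact ⟨v, hvI, hcv, by rw [hFm]; exact hcv, hsupp⟩
  · have hex : ∃ x ∈ v.support, DistRel c x u (gam c I u : ℤ) := by
      by_contra hno
      push_neg at hno
      have hGood : Good c I u (gam c I u - 1) := by
        refine ⟨v, hvI, hcv, ?_⟩
        intro x hx
        obtain ⟨j, hj, hdr⟩ := hsupp x hx
        have hjL : j ≠ gam c I u := by
          rintro rfl
          exact hno x hx hdr
        exact ⟨j, by omega, hdr⟩
      have h2 : gam c I u ≤ gam c I u - 1 :=
        Nat.sInf_le (s := {ℓ | Good c I u ℓ}) hGood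
      omega
    obtain ⟨x, hx, hdr⟩ := hex
    have hFm : Fm c I u = x := shift_eq_of_distRel hdr
    refine ⟨by rw [hFm]; exact hdr, v, hvI, hcv, by rw [hFm]; exact mem_support_iff.1 hx, hsupp⟩

theorem fm_mem {c : Fin n → ℤ} {I : Ideal (MvPolynomial (Fin n) K)}
    (hdown : ∀ x z : Fin n →₀ ℕ, ∀ m : ℤ, DistRel c x z m → m < 0 → lt' x z)
    {u : Fin n →₀ ℕ} (hne : ∃ ℓ, Good c I u ℓ) :
    monomial (Fm c I u) (1 : K) ∈ initialIdeal lt' I := by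
  obtain ⟨hdrF, v, hvI, hcu, hcF, hsupp⟩ := fm_spec hne
  refine Ideal.subset_span ⟨v, hvI, Fm c I u, ⟨mem_support_iff.2 hcF, ?_⟩, rfl⟩
  intro x hx hne'
  obtain ⟨j, hj, hdr⟩ := hsupp x hx
  have hdx : DistRel c x (Fm c I u) ((j : ℤ) - (gam c I u : ℤ)) := by
    intro i
    have h1 := hdr i
    have h2 := hdrF i
    have e : ((j : ℤ) - (gam c I u : ℤ)) * c i = (j : ℤ) * c i - (gam c I u : ℤ) * c i := by
      ring
    linarith
  have hjL : (j : ℤ) ≠ (gam c I u : ℤ) := by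
    intro he
    exact hne' (distRel_unique_pt hdr (he ▸ hdrF))
  exact hdown x _ _ hdx (by omega)

theorem gam_inv {c : Fin n → ℤ} {I : Ideal (MvPolynomial (Fin n) K)}
    (hc0 : ∃ i, c i ≠ 0) {u : Fin n →₀ ℕ} (hne : ∃ ℓ, Good c I u ℓ) :
    Good (fun i => -(c i)) I (Fm c I u) (gam c I u) ∧
    gam (fun i => -(c i)) I (Fm c I u) = gam c I u ∧
    Fm (fun i => -(c i)) I (Fm c I u) = u := by
  obtain ⟨hdrF, v, hvI, hcu, hcF, hsupp⟩ := fm_spec hne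
  set L := gam c I u with hLdef
  set z := Fm c I u with hzdef
  have ha : Good (fun i => -(c i)) I z L := by
    refine ⟨v, hvI, hcF, ?_⟩
    intro x hx
    obtain ⟨j, hj, hdr⟩ := hsupp x hx
    refine ⟨L - j, by omega, ?_⟩
    rw [distRel_neg]
    intro i
    have h1 := hdr i
    have h2 := hdrF i
    have hcast : ((L - j : ℕ) : ℤ) = (L : ℤ) - (j : ℤ) := by
      have := Nat.cast_sub hj (R := ℤ)
      exact this
    rw [hcast]
    have e : -((L : ℤ) - (j : ℤ)) * c i = (j : ℤ) * c i - (L : ℤ) * c i := by ring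
    linarith
  have hb : ∀ t : ℕ, t < L → ¬ Good (fun i => -(c i)) I z t := by
    intro t ht hGt
    obtain ⟨v', hv'I, hcz', hsupp'⟩ := hGt
    set wc := C (coeff z v') * v - C (coeff z v) * v' with hwc
    have hwI : wc ∈ I :=
      Submodule.sub_mem _ (Ideal.mul_mem_left _ _ hvI) (Ideal.mul_mem_left _ _ hv'I)
    have hczw : coeff z wc = 0 := by
      rw [hwc, coeff_sub, coeff_C_mul, coeff_C_mul]
      ring
    have hcv'u : coeff u v' = 0 := by
      by_contra hne0
      obtain ⟨j', hj', hdr'⟩ := hsupp' u (mem_support_iff.2 hne0)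
      have h1 : DistRel c u z (-(j' : ℤ)) := distRel_neg.1 hdr'
      have h2 : DistRel c z u (j' : ℤ) := by
        have := distRel_symm h1
        simpa using this
      have h3 := distRel_unique_l hc0 h2 hdrF
      omega
    have hcuw : coeff u wc ≠ 0 := by
      rw [hwc, coeff_sub, coeff_C_mul, coeff_C_mul, hcv'u, mul_zero, sub_zero]
      exact mul_ne_zero hcz' hcu
    have hGL1 : Good c I u (L - 1) := by
      refine ⟨wc, hwI, hcuw, ?_⟩
      intro x hx
      have hxz : x ≠ z := by
        intro he
        rw [mem_support_iff, he, hczw] at hx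
        exact hx rfl
      have hcases : coeff x v ≠ 0 ∨ coeff x v' ≠ 0 := by
        by_contra hcon
        push_neg at hcon
        rw [mem_support_iff, hwc, coeff_sub, coeff_C_mul, coeff_C_mul, hcon.1, hcon.2,
          mul_zero, mul_zero, sub_zero] at hx
        exact hx rfl
      rcases hcases with h | h
      · obtain ⟨j, hj, hdr⟩ := hsupp x (mem_support_iff.2 h)
        have hjL : j ≠ L := by
          rintro rfl
          exact hxz (distRel_unique_pt hdr hdrF)
        exact ⟨j, by omega, hdr⟩
      · obtain ⟨j', hj', hdr'⟩ := hsupp' x (mem_support_iff.2 h)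
        have hj0 : j' ≠ 0 := by
          rintro rfl
          have h1 : DistRel c x z (0 : ℤ) := by
            have := distRel_neg.1 hdr'
            simpa using this
          exact hxz (distRel_unique_pt h1 (distRel_self c z))
        refine ⟨L - j', by omega, ?_⟩
        have h1 : DistRel c x z (-(j' : ℤ)) := distRel_neg.1 hdr'
        intro i
        have h2 := h1 i
        have h3 := hdrF i
        have hcast : ((L - j' : ℕ) : ℤ) = (L : ℤ) - (j' : ℤ) := by
          have hj'L : j' ≤ L := by omega
          exact Nat.cast_sub hj'L (R := ℤ)
        rw [hcast]
        have e : ((L : ℤ) - (j' : ℤ)) * c i = (L : ℤ) * c i - (j' : ℤ) * c i := by ring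
        have e2 : (-(j' : ℤ)) * c i = -((j' : ℤ) * c i) := by ring
        linarith
    have h4 : L ≤ L - 1 := Nat.sInf_le (s := {ℓ | Good c I u ℓ}) hGL1
    omega
  have hL' : gam (fun i => -(c i)) I z = L := by
    have hle : gam (fun i => -(c i)) I z ≤ L :=
      Nat.sInf_le (s := {ℓ | Good (fun i => -(c i)) I z ℓ}) ha
    rcases eq_or_lt_of_le hle with he | hlt2
    · exact he
    · exfalso
      have hnons : {ℓ | Good (fun i => -(c i)) I z ℓ}.Nonempty := ⟨L, ha⟩
      exact hb _ hlt2 (Nat.sInf_mem hnons)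
  refine ⟨ha, hL', ?_⟩
  rw [Fm, hL']
  apply shift_eq_of_distRel
  rw [distRel_neg]
  exact distRel_symm hdrF

end Main

end ArrowAux

/-- If `I` is homogeneous for a positive `ℤⁿ/ℤc`-grading and
`M = in_≺(I)`, `N = in_≺'(I)` for term orders with `x^{c⁺} ≺ x^{c⁻}` and
`x^{c⁺} ≻' x^{c⁻}`, then there is an arrow map `f : Mon M → Mon N` with respect to the
`ℤⁿ/ℤc`-grading and `≺`. -/


theorem arrow_map_of_initial_ideals {n : ℕ} {K : Type*} [Field K] (c : Fin n → ℤ)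
    (hcp : cpos c ≠ 0) (hcn : cneg c ≠ 0)
    (lt lt' : (Fin n →₀ ℕ) → (Fin n →₀ ℕ) → Prop)
    (hlt : IsTermOrder n lt) (hlt' : IsTermOrder n lt')
    (hlo : lt (cpos c) (cneg c)) (hlo' : lt' (cneg c) (cpos c))
    (I : Ideal (MvPolynomial (Fin n) K)) (hI : CHomIdeal c I)
    (M N : Ideal (MvPolynomial (Fin n) K))
    (hM : M = initialIdeal lt I) (hN : N = initialIdeal lt' I) :
    ∃ f : (Fin n →₀ ℕ) → (Fin n →₀ ℕ), IsArrowMap c lt M N f := by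
  classical
  subst hM
  subst hN
  have hipos : ∃ i, 0 < c i := by
    by_contra h
    push_neg at h
    apply hcp
    ext i
    rw [ArrowAux.cpos_apply]
    simp only [Finsupp.coe_zero, Pi.zero_apply]
    have := h i
    omega
  have hineg : ∃ i, c i < 0 := by
    by_contra h
    push_neg at h
    apply hcn
    ext i
    rw [ArrowAux.cneg_apply]
    simp only [Finsupp.coe_zero, Pi.zero_apply]
    have := h i
    omega
  have hc0 : ∃ i, c i ≠ 0 := hineg.imp fun _ h => h.ne
  obtain ⟨ip, hip⟩ := hipos
  obtain ⟨im, him⟩ := hineg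
  set c' : Fin n → ℤ := fun i => -(c i) with hc'def
  have hc'0 : ∃ i, c' i ≠ 0 := ⟨ip, by simp [hc'def]; omega⟩
  have hcpos' : cpos c' = cneg c := by
    ext i
    rw [ArrowAux.cpos_apply, ArrowAux.cneg_apply]
  have hcneg' : cneg c' = cpos c := by
    ext i
    rw [ArrowAux.cneg_apply, ArrowAux.cpos_apply]
    simp [hc'def]
  have hup : ∀ y x : Fin n →₀ ℕ, ∀ m : ℤ, DistRel c y x m → 0 < m → lt y x :=
    fun _ _ _ h hm => ArrowAux.chain_lt hlt hlo h hm
  have hlo'2 : lt' (cpos c') (cneg c') := by rw [hcpos', hcneg']; exact hlo'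
  have hup' : ∀ y x : Fin n →₀ ℕ, ∀ m : ℤ, DistRel c' y x m → 0 < m → lt' y x :=
    fun _ _ _ h hm => ArrowAux.chain_lt hlt' hlo'2 h hm
  have hdown' : ∀ x z : Fin n →₀ ℕ, ∀ m : ℤ, DistRel c x z m → m < 0 → lt' x z := by
    intro x z m h hm
    refine hup' x z (-m) (ArrowAux.distRel_neg.2 (by simpa using h)) (by omega)
  have hdown : ∀ x z : Fin n →₀ ℕ, ∀ m : ℤ, DistRel c' x z m → m < 0 → lt x z := by
    intro x z m h hm
    exact hup x z (-m) (ArrowAux.distRel_neg.1 h) (by omega)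
  have hcomp : ∀ f ∈ I, ∀ d : Fin n → ℤ, ArrowAux.comp c d f ∈ I :=
    fun f hf d => ArrowAux.comp_mem hI hf d
  have hcomp' : ∀ f ∈ I, ∀ d : Fin n → ℤ, ArrowAux.comp c' d f ∈ I := by
    intro f hf d
    have := hcomp f hf d
    rwa [← ArrowAux.comp_neg c d f] at this
  have hneM : ∀ u ∈ Mon (initialIdeal lt I), ∃ ℓ, ArrowAux.Good c I u ℓ :=
    fun u hu => ArrowAux.good_nonempty hlt hup hcomp him hu
  have hneN : ∀ z ∈ Mon (initialIdeal lt' I), ∃ ℓ, ArrowAux.Good c' I z ℓ :=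
    fun z hz => ArrowAux.good_nonempty hlt' hup' hcomp'
      (i₀ := ip) (by simp only [hc'def]; omega) hz
  have hgf : ∀ u ∈ Mon (initialIdeal lt I), ArrowAux.Fm c' I (ArrowAux.Fm c I u) = u :=
    fun u hu => (ArrowAux.gam_inv hc0 (hneM u hu)).2.2
  have hfg : ∀ z ∈ Mon (initialIdeal lt' I), ArrowAux.Fm c I (ArrowAux.Fm c' I z) = z := by
    intro z hz
    have h := (ArrowAux.gam_inv (c := c') hc'0 (hneN z hz)).2.2
    have he : (fun i => -(c' i)) = c := by funext i; simp [hc'def]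
    rwa [he] at h
  have hgamN : ∀ u ∈ Mon (initialIdeal lt I),
      ArrowAux.gam c' I (ArrowAux.Fm c I u) = ArrowAux.gam c I u :=
    fun u hu => (ArrowAux.gam_inv hc0 (hneM u hu)).2.1
  have hgoodN : ∀ u ∈ Mon (initialIdeal lt I),
      ArrowAux.Good c' I (ArrowAux.Fm c I u) (ArrowAux.gam c I u) :=
    fun u hu => (ArrowAux.gam_inv hc0 (hneM u hu)).1
  refine ⟨ArrowAux.Fm c I, ⟨?_, ?_, ?_⟩, ?_, ?_, ?_, ?_⟩
  · -- maps to
    intro u hu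
    exact ArrowAux.fm_mem hdown' (hneM u hu)
  · -- injective
    intro u₁ h₁ u₂ h₂ he
    rw [← hgf u₁ h₁, ← hgf u₂ h₂, he]
  · -- surjective
    intro z hz
    exact ⟨ArrowAux.Fm c' I z, ArrowAux.fm_mem hdown (hneN z hz), hfg z hz⟩
  · -- same degree
    intro u hu
    exact ⟨-(ArrowAux.gam c I u : ℤ), ArrowAux.distRel_symm (ArrowAux.fm_spec (hneM u hu)).1⟩
  · -- order
    intro u hu
    rcases Nat.eq_zero_or_pos (ArrowAux.gam c I u) with h0 | hpos
    · left
      show ArrowAux.shift c u _ = u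
      rw [h0]
      exact_mod_cast ArrowAux.shift_zero c u
    · right
      exact hup _ _ _ (ArrowAux.fm_spec (hneM u hu)).1 (by exact_mod_cast hpos)
  · -- monotone under multiplication
    intro u hu w ℓ ℓ' h1 h2
    have hdrF := (ArrowAux.fm_spec (hneM u hu)).1
    have huw : u + w ∈ Mon (initialIdeal lt I) := by
      show monomial (u + w) (1 : K) ∈ initialIdeal lt I
      have hmono : monomial (u + w) (1 : K) = monomial u 1 * monomial w 1 := by
        rw [monomial_mul, one_mul]
      rw [hmono]
      exact Ideal.mul_mem_right _ _ hu
    have hdrF2 := (ArrowAux.fm_spec (hneM _ huw)).1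
    have e1 : ℓ = -(ArrowAux.gam c I u : ℤ) :=
      ArrowAux.distRel_unique_l hc0 h1 (ArrowAux.distRel_symm hdrF)
    have e2 : ℓ' = -(ArrowAux.gam c I (u + w) : ℤ) :=
      ArrowAux.distRel_unique_l hc0 h2 (ArrowAux.distRel_symm hdrF2)
    have hGu : ArrowAux.Good c I u (ArrowAux.gam c I u) := Nat.sInf_mem (hneM u hu)
    have hle : ArrowAux.gam c I (u + w) ≤ ArrowAux.gam c I u :=
      Nat.sInf_le (s := {ℓ | ArrowAux.Good c I (u + w) ℓ}) (ArrowAux.good_mul hGu)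
    rw [e1, e2, abs_neg, abs_neg, Int.abs_natCast, Int.abs_natCast]
    exact_mod_cast hle
  · -- inverse monotone
    intro u hu u' hu' w ℓ ℓ' hfe h1 h2
    have hdrF := (ArrowAux.fm_spec (hneM u hu)).1
    have hdrF' := (ArrowAux.fm_spec (hneM u' hu')).1
    have e1 : ℓ = -(ArrowAux.gam c I u : ℤ) :=
      ArrowAux.distRel_unique_l hc0 h1 (ArrowAux.distRel_symm hdrF)
    have e2 : ℓ' = -(ArrowAux.gam c I u' : ℤ) :=
      ArrowAux.distRel_unique_l hc0 h2 (ArrowAux.distRel_symm hdrF')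
    have hkey : ArrowAux.gam c' I (ArrowAux.Fm c I u + w) ≤ ArrowAux.gam c I u :=
      Nat.sInf_le (s := {ℓ | ArrowAux.Good c' I (ArrowAux.Fm c I u + w) ℓ})
        (ArrowAux.good_mul (hgoodN u hu))
    have hle : ArrowAux.gam c I u' ≤ ArrowAux.gam c I u := by
      have h3 : ArrowAux.gam c I u' = ArrowAux.gam c' I (ArrowAux.Fm c I u') :=
        (hgamN u' hu').symm
      rw [hfe] at h3
      omega
    rw [e1, e2, abs_neg, abs_neg, Int.abs_natCast, Int.abs_natCast]
    exact_mod_cast hle
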